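/- The only solutions M : ℝ → ℝ of the ODE M''(ξ) + (ξ·M(ξ))' = 0 that are integrable on ℝ are of the form M(ξ) = C·e^{−ξ²/2} for a constant C. -/

import Mathlib

open MeasureTheory Real

/-- the only integrable solutions of M'' + (ξ M)' = 0 on ℝ are
Gaussian multiples. -/
theorem integrable_solutions_are_gaussian
    (M : ℝ → ℝ) (hM : ContDiff ℝ 2 M)
    (hODE : ∀ ξ : ℝ, deriv (deriv M) ξ + deriv (fun s => s * M s) ξ = 0)
    (hint : Integrable M) :
    ∃ C : ℝ, ∀ ξ : ℝ, M ξ = C * Real.exp (-ξ ^ 2 / 2) := by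
  have hMd : Differentiable ℝ M := hM.differentiable (by norm_num)
  have hM1 : ContDiff ℝ 1 (deriv M) := by
    rw [show (2 : WithTop ℕ∞) = 1 + 1 from rfl, contDiff_succ_iff_deriv] at hM
    exact hM.2.2
  have hM'd : Differentiable ℝ (deriv M) := hM1.differentiable (by norm_num)
  -- the function g = M' + ξ M is constant
  set g : ℝ → ℝ := fun ξ => deriv M ξ + ξ * M ξ with hg
  have hmul : ∀ ξ : ℝ, HasDerivAt (fun s => s * M s) (M ξ + ξ * deriv M ξ) ξ := by
    intro ξ
    simpa [mul_comm] using (hasDerivAt_id ξ).fun_mul (hMd ξ).hasDerivAt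
  have hgd : ∀ ξ, HasDerivAt g (deriv (deriv M) ξ + (M ξ + ξ * deriv M ξ)) ξ := by
    intro ξ
    exact ((hM'd ξ).hasDerivAt).add (hmul ξ)
  have hg0 : ∀ ξ, deriv g ξ = 0 := by
    intro ξ
    rw [(hgd ξ).deriv]
    have := hODE ξ
    rw [(hmul ξ).deriv] at this
    linarith
  have hgc : ∀ ξ, g ξ = g 0 := by
    intro ξ
    exact is_const_of_deriv_eq_zero (fun x => (hgd x).differentiableAt) hg0 ξ 0
  set K : ℝ := g 0 with hK
  -- h = e^{ξ²/2} M, h' = K e^{ξ²/2}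
  have hexp : ∀ t : ℝ, HasDerivAt (fun s : ℝ => Real.exp (s^2/2)) (t * Real.exp (t^2/2)) t := by
    intro t
    have h1 : HasDerivAt (fun s : ℝ => s^2/2) t t := by
      simpa using ((hasDerivAt_pow 2 t).div_const 2)
    simpa [mul_comm] using h1.exp
  set h : ℝ → ℝ := fun ξ => Real.exp (ξ^2/2) * M ξ with hh
  have hhd : ∀ t : ℝ, HasDerivAt h (K * Real.exp (t^2/2)) t := by
    intro t
    have := (hexp t).fun_mul (hMd t).hasDerivAt
    have hgt : deriv M t + t * M t = K := hgc t
    refine this.congr_deriv ?_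
    rw [← hgt]; ring
  set I : ℝ → ℝ := fun ξ => ∫ t in (0:ℝ)..ξ, Real.exp (t^2/2) with hI
  have hcont : Continuous fun t : ℝ => Real.exp (t^2/2) := by continuity
  have hhval : ∀ ξ : ℝ, h ξ = h 0 + K * I ξ := by
    intro ξ
    have := intervalIntegral.integral_eq_sub_of_hasDerivAt
      (f := h) (f' := fun t => K * Real.exp (t^2/2)) (a := 0) (b := ξ)
      (fun t _ => hhd t) ((continuous_const.mul hcont : Continuous fun t : ℝ => K * Real.exp (t^2/2)).intervalIntegrable 0 ξ)
    rw [intervalIntegral.integral_const_mul] at this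
    simp only [hI]
    linarith
  -- lower bound on I
  have hIlb : ∀ ξ : ℝ, 0 < ξ → (Real.exp (ξ^2/2) - 1) / ξ ≤ I ξ := by
    intro ξ hξ
    rw [div_le_iff₀ hξ]
    have h1 : (∫ t in (0:ℝ)..ξ, t * Real.exp (t^2/2)) = Real.exp (ξ^2/2) - 1 := by
      rw [intervalIntegral.integral_eq_sub_of_hasDerivAt (fun t _ => hexp t)
        ((continuous_id.mul hcont).intervalIntegrable 0 ξ)]
      simp
    have h2 : (∫ t in (0:ℝ)..ξ, t * Real.exp (t^2/2)) ≤ ∫ t in (0:ℝ)..ξ, ξ * Real.exp (t^2/2) := by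
      apply intervalIntegral.integral_mono_on hξ.le
        ((continuous_id.mul hcont).intervalIntegrable 0 ξ)
        ((continuous_const.mul hcont : Continuous fun t : ℝ => ξ * Real.exp (t^2/2)).intervalIntegrable 0 ξ)
      intro t ht
      exact mul_le_mul_of_nonneg_right ht.2 (Real.exp_pos _).le
    rw [intervalIntegral.integral_const_mul] at h2
    calc Real.exp (ξ^2/2) - 1 = ∫ t in (0:ℝ)..ξ, t * Real.exp (t^2/2) := h1.symm
      _ ≤ ξ * I ξ := h2
      _ = I ξ * ξ := mul_comm _ _
  -- K = 0
  have hK0 : K = 0 := by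
    by_contra hKne
    have hKpos : 0 < |K| := abs_pos.mpr hKne
    set A : ℝ := max 2 (4 * |h 0| / |K|) with hA
    have hA2 : (2:ℝ) ≤ A := le_max_left _ _
    have hApos : (0:ℝ) < A := by linarith
    -- for ξ ≥ A : |M ξ| ≥ (|K|/4) * ξ⁻¹
    have hbound : ∀ ξ : ℝ, A ≤ ξ → |K| / 4 * ξ⁻¹ ≤ |M ξ| := by
      intro ξ hξ
      have hξ2 : (2:ℝ) ≤ ξ := le_trans hA2 hξ
      have hξpos : (0:ℝ) < ξ := by linarith
      have hIξ : (Real.exp (ξ^2/2) - 1) / ξ ≤ I ξ := hIlb ξ hξpos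
      have hexppos := Real.exp_pos (ξ^2/2)
      -- I ξ ≥ ξ/2 ≥ 2|h0|/|K|  since e^x ≥ 1 + x
      have he : ξ^2/2 + 1 ≤ Real.exp (ξ^2/2) := Real.add_one_le_exp _
      have hEpos := Real.exp_pos (ξ^2/2)
      set E : ℝ := Real.exp (ξ^2/2) with hE
      have hE3 : 3 ≤ E := by nlinarith
      have hI1' : E - 1 ≤ ξ * I ξ := by
        have := hIlb ξ hξpos
        rw [div_le_iff₀ hξpos] at this
        nlinarith [this]
      have hI2 : ξ/2 ≤ I ξ := by
        have h1 : ξ/2 ≤ (E - 1)/ξ := by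
          rw [le_div_iff₀ hξpos]; nlinarith
        linarith [hIlb ξ hξpos]
      have hInn : 0 ≤ I ξ := by linarith
      have hh0 : |h 0| ≤ |K| * ξ / 4 := by
        have h1 : 4 * |h 0| / |K| ≤ A := le_max_right _ _
        rw [div_le_iff₀ hKpos] at h1
        nlinarith [abs_nonneg (h 0)]
      have habs : |K| * I ξ - |h 0| ≤ |h ξ| := by
        have h1 : h ξ = h 0 + K * I ξ := hhval ξ
        have h2 : |K * I ξ| ≤ |h ξ| + |h 0| := by
          have : K * I ξ = h ξ - h 0 := by rw [h1]; ring
          rw [this]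
          exact abs_sub _ _
        rw [abs_mul, abs_of_nonneg hInn] at h2
        linarith
      have hMval : |h ξ| = E * |M ξ| := by
        rw [hh]
        rw [abs_mul, abs_of_pos hEpos]
      have key : |K| * E ≤ 4 * ξ * |h ξ| := by
        nlinarith [mul_le_mul_of_nonneg_left habs (by positivity : (0:ℝ) ≤ 4*ξ),
          mul_le_mul_of_nonneg_left hh0 (by positivity : (0:ℝ) ≤ 4),
          mul_le_mul_of_nonneg_left hI1' (abs_nonneg K),
          mul_le_mul_of_nonneg_left hI2 (by positivity : (0:ℝ) ≤ |K| * ξ),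
          mul_pos hKpos hEpos]
      rw [hMval] at key
      rw [mul_comm, ← div_eq_inv_mul, div_le_iff₀ hξpos]
      nlinarith [key]
    -- contradiction with integrability
    have hintOn : IntegrableOn (fun x => |K|/4 * x⁻¹) (Set.Ioi A) := by
      apply Integrable.mono (hint.abs.integrableOn (s := Set.Ioi A))
      · apply AEStronglyMeasurable.const_mul
        exact (measurable_inv.aestronglyMeasurable)
      · filter_upwards [ae_restrict_mem measurableSet_Ioi] with x hx
        have hx' : A ≤ x := le_of_lt hx
        have hxpos : 0 < x := lt_of_lt_of_le hApos hx'
        have hb := hbound x hx'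
        rw [Real.norm_eq_abs, Real.norm_eq_abs, abs_abs,
          abs_of_nonneg (by positivity : (0:ℝ) ≤ |K|/4 * x⁻¹)]
        exact hb
    have hintInv : IntegrableOn (fun x : ℝ => x ^ (-1 : ℝ)) (Set.Ioi A) := by
      have h2 : IntegrableOn (fun x => (4/|K|) * (|K|/4 * x⁻¹)) (Set.Ioi A) :=
        hintOn.const_mul _
      apply h2.congr_fun _ measurableSet_Ioi
      intro x hx
      have hxpos : 0 < x := lt_of_lt_of_le hApos (le_of_lt hx)
      simp only [Real.rpow_neg hxpos.le, Real.rpow_one]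
      field_simp
    have := (integrableOn_Ioi_rpow_iff hApos).mp hintInv
    linarith
  -- conclude: M ξ = M 0 * exp(-ξ²/2)
  refine ⟨M 0, fun ξ => ?_⟩
  have h1 : h ξ = h 0 := by
    apply is_const_of_deriv_eq_zero (fun x => (hhd x).differentiableAt)
    intro x
    rw [(hhd x).deriv, hK0]
    ring
  have h2 : Real.exp (ξ^2/2) * M ξ = M 0 := by
    have : h 0 = M 0 := by simp [hh]
    rw [← this, ← h1, hh]
  have hep := Real.exp_pos (ξ^2/2)
  rw [show (-ξ^2/2 : ℝ) = -(ξ^2/2) by ring, Real.exp_neg]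
  field_simp
  linarith [h2]
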